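/- Let α ∈ [0,1) and let n ≥ 5 be an integer. Then the A_α-spectral radius ρ_α(K₁ ∨ (K_{n−3} ∪ 2K₁)) equals the largest real root of φ(x) = 0, where φ(x) = x³ − ((α+1)n + α − 4)x² + (αn² + (α²−2α−1)n − 2α + 1)x − α²n² + (5α²−3α+2)n − 10α² + 15α − 8. -/

import Mathlib

open Finset

/-- The join `G ∨g H` of two graphs: the disjoint union together with all edges
between the two parts. -/
def SimpleGraph.gjoin {α β : Type*} (G : SimpleGraph α) (H : SimpleGraph β) :
    SimpleGraph (α ⊕ β) where
  Adj u v := match u, v with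
    | Sum.inl u, Sum.inl v => G.Adj u v
    | Sum.inr u, Sum.inr v => H.Adj u v
    | _, _ => True
  symm := ⟨fun u v => match u, v with
    | Sum.inl u, Sum.inl v => G.adj_symm
    | Sum.inr u, Sum.inr v => H.adj_symm
    | Sum.inl _, Sum.inr _ | Sum.inr _, Sum.inl _ => fun _ => trivial⟩
  loopless := ⟨fun u => by cases u <;> simp⟩

infixl:60 " ∨g " => SimpleGraph.gjoin

/-- The `A_α`-matrix `α • D(G) + (1-α) • A(G)` of a graph `G`. -/
noncomputable def aAlphaMatrix {V : Type*} [Fintype V] [DecidableEq V]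
    (α : ℝ) (G : SimpleGraph V) : Matrix V V ℝ := by
  classical
  exact α • Matrix.diagonal (fun v => (G.degree v : ℝ)) + (1 - α) • G.adjMatrix ℝ

/-- The `A_α`-spectral radius `ρ_α(G)`: the largest eigenvalue of `A_α(G)`. -/
noncomputable def rhoAlpha {V : Type*} [Fintype V] [DecidableEq V]
    (α : ℝ) (G : SimpleGraph V) : ℝ :=
  sSup (spectrum ℝ (aAlphaMatrix α G))

/-- The signless Laplacian matrix `Q(G) = D(G) + A(G)`. -/
noncomputable def signlessLaplacian {V : Type*} [Fintype V] [DecidableEq V]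
    (G : SimpleGraph V) : Matrix V V ℝ := by
  classical
  exact Matrix.diagonal (fun v => (G.degree v : ℝ)) + G.adjMatrix ℝ

/-- `q(G)`: the largest eigenvalue of the signless Laplacian matrix of `G`. -/
noncomputable def qIndex {V : Type*} [Fintype V] [DecidableEq V]
    (G : SimpleGraph V) : ℝ :=
  sSup (spectrum ℝ (signlessLaplacian G))

/-- The number of edges (the size) of a graph. -/
noncomputable def edgeCount {V : Type*} [Fintype V] [DecidableEq V]
    (G : SimpleGraph V) : ℕ := by
  classical
  exact G.edgeFinset.card

/-- `i(G - S)`: the number of isolated vertices of the graph obtained from `G`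
by deleting the vertices of `S` together with all edges incident to `S`. -/
noncomputable def isolGminus {V : Type*} [Fintype V] [DecidableEq V]
    (G : SimpleGraph V) (S : Finset V) : ℕ := by
  classical
  exact (Finset.univ.filter (fun v => v ∉ S ∧ ∀ u, G.Adj v u → u ∈ S)).card

/-- `F(n)`: the edge bound from Theorem 1.1. -/
def Fbound (n : ℕ) : ℕ :=
  if n = 6 then 9 else if n = 8 then 18 else (n - 2).choose 2 + 2

/-- `f(α)`: the order bound from Theorem 1.2. -/
noncomputable def fAlpha (α : ℝ) : ℝ :=
  if α ≤ 1 / 2 then 20 else if α ≤ 5 / 7 then 25 else 7 / (1 - α) + 3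

/-- The graph `K₁ ∨ (K_{n-3} ∪ 2K₁)`. -/
def G2 (n : ℕ) : SimpleGraph (Fin 1 ⊕ (Fin (n - 3) ⊕ Fin 2)) :=
  (⊤ : SimpleGraph (Fin 1)) ∨g ((⊤ : SimpleGraph (Fin (n - 3))) ⊕g (⊥ : SimpleGraph (Fin 2)))


section Aux

open Matrix

lemma matrix_mem_spectrum_iff' {V : Type*} [Fintype V] [DecidableEq V]
    (M : Matrix V V ℝ) (μ : ℝ) :
    μ ∈ spectrum ℝ M ↔ ∃ v, v ≠ 0 ∧ M.mulVec v = μ • v := by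
  rw [spectrum.mem_iff, Matrix.isUnit_iff_isUnit_det, isUnit_iff_ne_zero, not_ne_iff,
    ← Matrix.exists_mulVec_eq_zero_iff]
  have halg : ∀ v : V → ℝ, (algebraMap ℝ (Matrix V V ℝ) μ - M).mulVec v = μ • v - M.mulVec v := by
    intro v
    rw [Matrix.sub_mulVec, Algebra.algebraMap_eq_smul_one, Matrix.smul_mulVec,
      Matrix.one_mulVec]
  constructor
  · rintro ⟨v, hv0, h⟩
    exact ⟨v, hv0, by rw [halg v] at h; exact (sub_eq_zero.mp h).symm⟩
  · rintro ⟨v, hv0, h⟩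
    exact ⟨v, hv0, by rw [halg v, h, sub_self]⟩

lemma perron_bound' {V : Type*} [Fintype V] [DecidableEq V]
    (M : Matrix V V ℝ) (hsym : Mᵀ = M) (hnn : ∀ i j, 0 ≤ M i j)
    (w : V → ℝ) (hw : ∀ i, 0 < w i) (r : ℝ) (hMw : M.mulVec w = r • w)
    {μ : ℝ} (v : V → ℝ) (hv0 : v ≠ 0) (hMv : M.mulVec v = μ • v) : μ ≤ r := by
  set u : V → ℝ := fun i => |v i| with hu
  have hu0 : ∀ i, 0 ≤ u i := fun i => abs_nonneg _
  have key : ∀ i, |μ| * u i ≤ ∑ j, M i j * u j := by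
    intro i
    have h1 : |μ| * u i = |(M.mulVec v) i| := by
      rw [hMv]; simp [hu, abs_mul]
    rw [h1]
    calc |(M.mulVec v) i| = |∑ j, M i j * v j| := by rfl
      _ ≤ ∑ j, |M i j * v j| := Finset.abs_sum_le_sum_abs _ _
      _ = ∑ j, M i j * u j := by
          refine Finset.sum_congr rfl fun j _ => ?_
          rw [abs_mul, abs_of_nonneg (hnn i j)]
  have hsum : |μ| * ∑ i, w i * u i ≤ r * ∑ i, w i * u i := by
    calc |μ| * ∑ i, w i * u i = ∑ i, w i * (|μ| * u i) := by
          rw [Finset.mul_sum]; exact Finset.sum_congr rfl fun i _ => by ring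
      _ ≤ ∑ i, w i * (∑ j, M i j * u j) := by
          refine Finset.sum_le_sum fun i _ => ?_
          exact mul_le_mul_of_nonneg_left (key i) (hw i).le
      _ = ∑ j, (∑ i, M i j * w i) * u j := by
          simp_rw [Finset.mul_sum, Finset.sum_mul]
          rw [Finset.sum_comm]
          exact Finset.sum_congr rfl fun j _ => Finset.sum_congr rfl fun i _ => by ring
      _ = ∑ j, (r * w j) * u j := by
          refine Finset.sum_congr rfl fun j _ => ?_
          have : ∑ i, M i j * w i = (Mᵀ.mulVec w) j := by
            simp [Matrix.mulVec, dotProduct, Matrix.transpose_apply]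
          rw [this, hsym, hMw]; simp
      _ = r * ∑ i, w i * u i := by
          rw [Finset.mul_sum]; exact Finset.sum_congr rfl fun i _ => by ring
  have hpos : 0 < ∑ i, w i * u i := by
    obtain ⟨i0, hi0⟩ := Function.ne_iff.mp hv0
    have : 0 < w i0 * u i0 := mul_pos (hw i0) (abs_pos.mpr hi0)
    exact lt_of_lt_of_le this (Finset.single_le_sum (f := fun i => w i * u i)
      (fun i _ => mul_nonneg (hw i).le (hu0 i)) (Finset.mem_univ i0))
  have habs : |μ| ≤ r := le_of_mul_le_mul_right (by linarith [hsum]) hpos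
  exact le_trans (le_abs_self μ) habs

open scoped Classical in
lemma aAlpha_mulVec_apply' {V : Type*} [Fintype V] [DecidableEq V]
    (α : ℝ) (G : SimpleGraph V) (w : V → ℝ) (v : V) :
    (aAlphaMatrix α G).mulVec w v
      = ∑ u, if G.Adj v u then α * w v + (1-α) * w u else 0 := by
  classical
  unfold aAlphaMatrix
  rw [Matrix.add_mulVec, Matrix.smul_mulVec, Matrix.smul_mulVec]
  simp only [Pi.add_apply, Pi.smul_apply, smul_eq_mul]
  have hdeg : ((G.degree v : ℝ)) = ∑ u, if G.Adj v u then (1:ℝ) else 0 := by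
    rw [SimpleGraph.degree, SimpleGraph.neighborFinset_eq_filter, Finset.card_filter]
    push_cast [apply_ite (Nat.cast : ℕ → ℝ)]
    rfl
  rw [Matrix.mulVec_diagonal, hdeg]
  simp only [Matrix.mulVec, dotProduct, SimpleGraph.adjMatrix_apply]
  have h1 : α * ((∑ u, if G.Adj v u then (1:ℝ) else 0) * w v)
      = ∑ u, (if G.Adj v u then (α * w v) else 0) := by
    rw [Finset.sum_mul, Finset.mul_sum]
    exact Finset.sum_congr rfl fun u _ => by split <;> ring
  rw [h1, Finset.mul_sum, ← Finset.sum_add_distrib]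
  refine Finset.sum_congr rfl fun u _ => ?_
  split <;> ring

lemma aAlpha_transpose {V : Type*} [Fintype V] [DecidableEq V]
    (α : ℝ) (G : SimpleGraph V) : (aAlphaMatrix α G)ᵀ = aAlphaMatrix α G := by
  classical
  unfold aAlphaMatrix
  rw [Matrix.transpose_add, Matrix.transpose_smul, Matrix.transpose_smul,
    Matrix.diagonal_transpose, SimpleGraph.transpose_adjMatrix]

lemma aAlpha_nonneg {V : Type*} [Fintype V] [DecidableEq V]
    {α : ℝ} (hα0 : 0 ≤ α) (hα1 : α ≤ 1) (G : SimpleGraph V) (i j : V) :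
    0 ≤ aAlphaMatrix α G i j := by
  classical
  unfold aAlphaMatrix
  simp only [Matrix.add_apply, Matrix.smul_apply, Matrix.diagonal_apply,
    SimpleGraph.adjMatrix_apply, smul_eq_mul]
  have h1 : (0:ℝ) ≤ 1 - α := by linarith
  split <;> split <;> positivity

lemma G2_adj_ll {n : ℕ} (i j : Fin 1) : ¬ (G2 n).Adj (Sum.inl i) (Sum.inl j) := by
  simp [G2, SimpleGraph.gjoin, Subsingleton.elim i j]

lemma G2_adj_lr {n : ℕ} (i : Fin 1) (u : Fin (n-3) ⊕ Fin 2) :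
    (G2 n).Adj (Sum.inl i) (Sum.inr u) := trivial

lemma G2_adj_rl {n : ℕ} (i : Fin 1) (u : Fin (n-3) ⊕ Fin 2) :
    (G2 n).Adj (Sum.inr u) (Sum.inl i) := trivial

lemma G2_adj_cc {n : ℕ} (i j : Fin (n-3)) :
    (G2 n).Adj (Sum.inr (Sum.inl i)) (Sum.inr (Sum.inl j)) ↔ i ≠ j := by
  simp [G2, SimpleGraph.gjoin, SimpleGraph.sum]

lemma G2_adj_cp {n : ℕ} (i : Fin (n-3)) (j : Fin 2) :
    ¬ (G2 n).Adj (Sum.inr (Sum.inl i)) (Sum.inr (Sum.inr j)) := by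
  simp [G2, SimpleGraph.gjoin, SimpleGraph.sum]

lemma G2_adj_pc {n : ℕ} (i : Fin 2) (j : Fin (n-3)) :
    ¬ (G2 n).Adj (Sum.inr (Sum.inr i)) (Sum.inr (Sum.inl j)) := by
  simp [G2, SimpleGraph.gjoin, SimpleGraph.sum]

lemma G2_adj_pp {n : ℕ} (i j : Fin 2) :
    ¬ (G2 n).Adj (Sum.inr (Sum.inr i)) (Sum.inr (Sum.inr j)) := by
  simp [G2, SimpleGraph.gjoin, SimpleGraph.sum]

end Aux

theorem rhoAlpha_G2_largest_root (α : ℝ) (hα0 : 0 ≤ α) (hα1 : α < 1)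
    (n : ℕ) (hn : 5 ≤ n) :
    IsGreatest {x : ℝ | x ^ 3 - ((α + 1) * (n : ℝ) + α - 4) * x ^ 2
        + (α * (n : ℝ) ^ 2 + (α ^ 2 - 2 * α - 1) * (n : ℝ) - 2 * α + 1) * x
        - α ^ 2 * (n : ℝ) ^ 2 + (5 * α ^ 2 - 3 * α + 2) * (n : ℝ)
        - 10 * α ^ 2 + 15 * α - 8 = 0} (rhoAlpha α (G2 n)) := by
  classical
  set N : ℝ := (n : ℝ) with hN
  have hN5 : (5:ℝ) ≤ N := by rw [hN]; exact_mod_cast hn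
  have hm : ((n - 3 : ℕ) : ℝ) = N - 3 := by
    rw [hN]; push_cast [Nat.cast_sub (by omega : 3 ≤ n)]; ring
  set f : ℝ → ℝ := fun x => x ^ 3 - ((α + 1) * N + α - 4) * x ^ 2
        + (α * N ^ 2 + (α ^ 2 - 2 * α - 1) * N - 2 * α + 1) * x
        - α ^ 2 * N ^ 2 + (5 * α ^ 2 - 3 * α + 2) * N
        - 10 * α ^ 2 + 15 * α - 8 with hf
  set S : Set ℝ := {x : ℝ | f x = 0} with hS
  have h1α : (0:ℝ) < 1 - α := by linarith
  -- values of f at the two test points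
  have hfa : f (N - 4 + α) = -((1-α)^2 * (N-3) * (N-4)) := by rw [hf]; ring
  have hfaneg : f (N - 4 + α) < 0 := by
    rw [hfa]
    have : (0:ℝ) < (1-α)^2 * (N-3) * (N-4) :=
      mul_pos (mul_pos (pow_pos h1α 2) (by linarith)) (by linarith)
    linarith
  have hfb : f (N - 1) = (1-α) * (2*(N-α)*(N-1-α) - 2*(1-α)*(3-α)) := by rw [hf]; ring
  have hfbpos : 0 < f (N - 1) := by
    rw [hfb]
    have h2 : (1-α)*(3-α) < (N-α)*(N-1-α) := by nlinarith
    nlinarith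
  -- f is the evaluation of a nonzero polynomial, so S is finite
  have hcont : Continuous f := by rw [hf]; fun_prop
  have hSfin : S.Finite := by
    set p : Polynomial ℝ := Polynomial.X ^ 3
        - Polynomial.C ((α + 1) * N + α - 4) * Polynomial.X ^ 2
        + Polynomial.C (α * N ^ 2 + (α ^ 2 - 2 * α - 1) * N - 2 * α + 1) * Polynomial.X
        + Polynomial.C (- α ^ 2 * N ^ 2 + (5 * α ^ 2 - 3 * α + 2) * N
            - 10 * α ^ 2 + 15 * α - 8) with hp
    have hev : ∀ x, p.eval x = f x := by
      intro x; rw [hp, hf]; simp; ring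
    have hp0 : p ≠ 0 := by
      intro h
      have := hev (N - 1)
      rw [h] at this
      simp at this
      rw [← this] at hfbpos
      exact lt_irrefl _ hfbpos
    have : S = {x | p.IsRoot x} := by
      ext x; simp [hS, Polynomial.IsRoot, hev x]
    rw [this]
    exact Polynomial.finite_setOf_isRoot hp0
  -- a root above N - 4 + α exists by the intermediate value theorem
  have hab : N - 4 + α ≤ N - 1 := by linarith
  have hx0 : ∃ x0 ∈ Set.Icc (N - 4 + α) (N - 1), f x0 = 0 := by
    have := intermediate_value_Icc hab hcont.continuousOn
    have h0mem : (0:ℝ) ∈ Set.Icc (f (N - 4 + α)) (f (N - 1)) :=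
      ⟨hfaneg.le, hfbpos.le⟩
    obtain ⟨x0, hx0mem, hx0⟩ := this h0mem
    exact ⟨x0, hx0mem, hx0⟩
  obtain ⟨x0, hx0mem, hx0⟩ := hx0
  have hSne : S.Nonempty := ⟨x0, hx0⟩
  -- the greatest root r
  have htoFinset_ne : hSfin.toFinset.Nonempty := by
    rwa [Set.Finite.toFinset_nonempty]
  set r : ℝ := hSfin.toFinset.max' htoFinset_ne with hr
  have hrS : r ∈ S := hSfin.mem_toFinset.mp (hSfin.toFinset.max'_mem htoFinset_ne)
  have hrub : ∀ x ∈ S, x ≤ r := fun x hx =>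
    hSfin.toFinset.le_max' x (hSfin.mem_toFinset.mpr hx)
  have hSg : IsGreatest S r := ⟨hrS, hrub⟩
  -- r is strictly above N - 4 + α
  have hrgt : N - 4 + α < r := by
    rcases eq_or_lt_of_le (hrub x0 hx0) with h | h
    · have : N - 4 + α < x0 ∨ N - 4 + α = x0 := by
        rcases eq_or_lt_of_le hx0mem.1 with h' | h'
        · right; exact h'
        · left; exact h'
      rcases this with h' | h'
      · linarith [hrub x0 hx0]
      · exfalso; rw [← h'] at hx0; rw [hx0] at hfaneg; exact lt_irrefl _ hfaneg
    · linarith [hx0mem.1]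
  have hrα : α < r := by linarith
  have hrd : r - (N - 4 + α) > 0 := by linarith
  have hrα' : r - α > 0 := by linarith
  -- the positive eigenvector
  set b : ℝ := (1 - α) / (r - (N - 4 + α)) with hb
  set c : ℝ := (1 - α) / (r - α) with hc
  have hbpos : 0 < b := div_pos h1α hrd
  have hcpos : 0 < c := div_pos h1α hrα'
  set w : Fin 1 ⊕ (Fin (n-3) ⊕ Fin 2) → ℝ :=
    Sum.elim (fun _ => 1) (Sum.elim (fun _ => b) (fun _ => c)) with hw
  have hwpos : ∀ i, 0 < w i := by
    rintro (i | (i | i)) <;> simp [hw] <;> [exact hbpos; exact hcpos]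
  have hw0 : w ≠ 0 := by
    intro h
    have := congrFun h (Sum.inl 0)
    simp [hw] at this
  have hroot : f r = 0 := hrS
  -- the eigenvector equation
  have hMw : (aAlphaMatrix α (G2 n)).mulVec w = r • w := by
    funext v
    rw [aAlpha_mulVec_apply']
    rcases v with i | (i | i)
    · -- center vertex
      rw [Fintype.sum_sum_type]
      have e1 : ∀ j : Fin 1, (if (G2 n).Adj (Sum.inl i) (Sum.inl j)
          then α * w (Sum.inl i) + (1-α) * w (Sum.inl j) else 0) = 0 :=
        fun j => if_neg (G2_adj_ll i j)
      rw [Finset.sum_congr rfl (fun j _ => e1 j), Finset.sum_const]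
      rw [Fintype.sum_sum_type]
      have e2 : ∀ j : Fin (n-3), (if (G2 n).Adj (Sum.inl i) (Sum.inr (Sum.inl j))
          then α * w (Sum.inl i) + (1-α) * w (Sum.inr (Sum.inl j)) else 0)
          = α * 1 + (1-α) * b := fun j => by
        rw [if_pos (G2_adj_lr i _)]; simp [hw]
      have e3 : ∀ j : Fin 2, (if (G2 n).Adj (Sum.inl i) (Sum.inr (Sum.inr j))
          then α * w (Sum.inl i) + (1-α) * w (Sum.inr (Sum.inr j)) else 0)
          = α * 1 + (1-α) * c := fun j => by
        rw [if_pos (G2_adj_lr i _)]; simp [hw]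
      rw [Finset.sum_congr rfl (fun j _ => e2 j), Finset.sum_congr rfl (fun j _ => e3 j)]
      simp only [Finset.sum_const, Finset.card_univ, Fintype.card_fin, smul_eq_mul,
        nsmul_eq_mul, Pi.smul_apply, hw, Sum.elim_inl, smul_zero]
      rw [hm]
      rw [hb, hc]
      field_simp
      rw [hf] at hroot
      linear_combination (-1 : ℝ) * hroot
    · -- clique vertex
      rw [Fintype.sum_sum_type]
      have e1 : ∀ j : Fin 1, (if (G2 n).Adj (Sum.inr (Sum.inl i)) (Sum.inl j)
          then α * w (Sum.inr (Sum.inl i)) + (1-α) * w (Sum.inl j) else 0)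
          = α * b + (1-α) * 1 := fun j => by
        rw [if_pos (G2_adj_rl j _)]; simp [hw]
      rw [Finset.sum_congr rfl (fun j _ => e1 j)]
      rw [Fintype.sum_sum_type]
      have e2 : ∀ j : Fin (n-3), (if (G2 n).Adj (Sum.inr (Sum.inl i)) (Sum.inr (Sum.inl j))
          then α * w (Sum.inr (Sum.inl i)) + (1-α) * w (Sum.inr (Sum.inl j)) else 0)
          = (α * b + (1-α) * b) - (if i = j then (α * b + (1-α) * b) else 0) := fun j => by
        by_cases h : i = j
        · rw [if_neg (by rw [G2_adj_cc]; simp [h]), if_pos h]; ring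
        · rw [if_pos (by rw [G2_adj_cc]; exact h), if_neg h]; simp [hw]
      have e3 : ∀ j : Fin 2, (if (G2 n).Adj (Sum.inr (Sum.inl i)) (Sum.inr (Sum.inr j))
          then α * w (Sum.inr (Sum.inl i)) + (1-α) * w (Sum.inr (Sum.inr j)) else 0) = 0 :=
        fun j => if_neg (G2_adj_cp i j)
      rw [Finset.sum_congr rfl (fun j _ => e2 j), Finset.sum_congr rfl (fun j _ => e3 j)]
      rw [Finset.sum_sub_distrib, Finset.sum_ite_eq, Finset.sum_const]
      simp only [Finset.sum_const, Finset.card_univ, Fintype.card_fin, smul_eq_mul,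
        nsmul_eq_mul, Pi.smul_apply, hw, Sum.elim_inr, Sum.elim_inl, smul_zero,
        Finset.mem_univ, if_pos]
      rw [hm, hb]
      field_simp
      ring
    · -- pendant vertex
      rw [Fintype.sum_sum_type]
      have e1 : ∀ j : Fin 1, (if (G2 n).Adj (Sum.inr (Sum.inr i)) (Sum.inl j)
          then α * w (Sum.inr (Sum.inr i)) + (1-α) * w (Sum.inl j) else 0)
          = α * c + (1-α) * 1 := fun j => by
        rw [if_pos (G2_adj_rl j _)]; simp [hw]
      rw [Finset.sum_congr rfl (fun j _ => e1 j)]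
      rw [Fintype.sum_sum_type]
      have e2 : ∀ j : Fin (n-3), (if (G2 n).Adj (Sum.inr (Sum.inr i)) (Sum.inr (Sum.inl j))
          then α * w (Sum.inr (Sum.inr i)) + (1-α) * w (Sum.inr (Sum.inl j)) else 0) = 0 :=
        fun j => if_neg (G2_adj_pc i j)
      have e3 : ∀ j : Fin 2, (if (G2 n).Adj (Sum.inr (Sum.inr i)) (Sum.inr (Sum.inr j))
          then α * w (Sum.inr (Sum.inr i)) + (1-α) * w (Sum.inr (Sum.inr j)) else 0) = 0 :=
        fun j => if_neg (G2_adj_pp i j)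
      rw [Finset.sum_congr rfl (fun j _ => e2 j), Finset.sum_congr rfl (fun j _ => e3 j)]
      simp only [Finset.sum_const, Finset.card_univ, Fintype.card_fin, smul_eq_mul,
        nsmul_eq_mul, Pi.smul_apply, hw, Sum.elim_inr, smul_zero]
      rw [hc]
      field_simp
      ring
  -- r is the greatest element of the spectrum
  have hspecmem : r ∈ spectrum ℝ (aAlphaMatrix α (G2 n)) :=
    (matrix_mem_spectrum_iff' _ _).mpr ⟨w, hw0, hMw⟩
  have hspecub : ∀ μ ∈ spectrum ℝ (aAlphaMatrix α (G2 n)), μ ≤ r := by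
    intro μ hμ
    obtain ⟨v, hv0, hMv⟩ := (matrix_mem_spectrum_iff' _ _).mp hμ
    exact perron_bound' _ (aAlpha_transpose α (G2 n)) (aAlpha_nonneg hα0 hα1.le (G2 n))
      w hwpos r hMw v hv0 hMv
  have hrho : rhoAlpha α (G2 n) = r := by
    rw [rhoAlpha]
    exact IsGreatest.csSup_eq ⟨hspecmem, hspecub⟩
  rw [hrho]
  exact hSg
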